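/- Let T > 0 and let (u,ρ) be a classical solution of the π-Camassa–Holm system on [0,T)×𝕊. Assume that the quantity H(t) = ∫_𝕊 (u(t,x)² + ∂ₓu(t,x)² + π(ρ)(t,x)²) dx is independent of t ∈ [0,T). If there is a nonempty open set Ω ⊆ (0,T)×𝕊 on which both u and π(ρ) vanish identically, then u(t,x) = 0 and π(ρ)(t,x) = 0 for all (t,x) ∈ [0,T)×𝕊. -/

import Mathlib

open MeasureTheory Set intervalIntegral

/-- The inverse Helmholtz operator `Λ⁻² = (1 - ∂ₓ²)⁻¹` on the circle `𝕊 = ℝ/ℤ`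
(modelled by 1-periodic functions on `ℝ`), given by convolution with the periodic
kernel `G(x) = cosh(x - ⌊x⌋ - 1/2)/(2 sinh(1/2))`. -/
noncomputable def lam2S (w : ℝ → ℝ) (x : ℝ) : ℝ :=
  ∫ y in (0:ℝ)..1,
    (Real.cosh ((x - y) - ⌊x - y⌋ - 1/2) / (2 * Real.sinh (1/2))) * w y

/-- The projection `π(ρ) = ρ - ∫_𝕊 ρ dx` on the circle (modelled on `[0,1)`). -/
noncomputable def piS (r : ℝ → ℝ) (x : ℝ) : ℝ := r x - ∫ y in (0:ℝ)..1, r y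

namespace PiCH

noncomputable def kern (x y : ℝ) : ℝ :=
  Real.cosh ((x - y) - ⌊x - y⌋ - 1/2) / (2 * Real.sinh (1/2))

lemma sinh_half_pos : 0 < Real.sinh (1/2) := Real.sinh_pos_iff.mpr (by norm_num)

lemma kern_lower (x y : ℝ) : 1 / (2 * Real.sinh (1/2)) ≤ kern x y := by
  unfold kern
  have := sinh_half_pos
  gcongr
  exact Real.one_le_cosh _

lemma kern_upper (x y : ℝ) : kern x y ≤ Real.cosh 1 / (2 * Real.sinh (1/2)) := by
  unfold kern
  have := sinh_half_pos
  gcongr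
  rw [Real.cosh_le_cosh]
  have h1 : (0:ℝ) ≤ (x - y) - ⌊x - y⌋ := by
    have := Int.fract_nonneg (x - y); rwa [Int.fract] at this
  have h2 : (x - y) - ⌊x - y⌋ < 1 := by
    have := Int.fract_lt_one (x - y); rwa [Int.fract] at this
  rw [abs_le, abs_one]
  constructor <;> nlinarith

lemma kern_nonneg (x y : ℝ) : 0 ≤ kern x y :=
  le_trans (by positivity) (kern_lower x y)

lemma kern_meas (x : ℝ) : Measurable fun y => kern x y := by
  unfold kern
  apply Measurable.div _ measurable_const
  apply Real.continuous_cosh.measurable.comp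
  have h1 : Measurable fun y : ℝ => x - y := measurable_const.sub measurable_id
  have h2 : Measurable fun y : ℝ => (⌊x - y⌋ : ℝ) :=
    measurable_from_top.comp (Measurable.floor h1)
  exact (h1.sub h2).sub measurable_const

lemma kern_periodic (x : ℝ) : Function.Periodic (fun y => kern x y) 1 := by
  intro y
  unfold kern
  have : x - (y + 1) - ⌊x - (y + 1)⌋ = x - y - ⌊x - y⌋ := by
    have h := Int.fract_sub_intCast (x - y) 1
    simp only [Int.fract] at h
    push_cast at h
    have : x - (y + 1) = x - y - (1:ℤ) := by push_cast; ring
    rw [this]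
    push_cast at h ⊢
    linarith [h]
  simp only []
  rw [this]

lemma kern_shift (x y : ℝ) : kern x (y + 1) = kern x y := kern_periodic x y

lemma kern_intble (w : ℝ → ℝ) (hw : Continuous w) (x a b : ℝ) :
    IntervalIntegrable (fun y => kern x y * w y) volume a b := by
  rw [intervalIntegrable_iff]
  obtain ⟨M, hM⟩ := (isCompact_uIcc (a := a) (b := b)).exists_bound_of_continuousOn
    hw.continuousOn
  have hM0 : 0 ≤ M := le_trans (norm_nonneg _) (hM a left_mem_uIcc)
  apply Measure.integrableOn_of_bounded (M := Real.cosh 1 / (2 * Real.sinh (1/2)) * M)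
  · rw [Set.uIoc]; exact measure_Ioc_lt_top.ne
  · exact ((kern_meas x).mul hw.measurable).aestronglyMeasurable
  · refine ae_restrict_of_forall_mem measurableSet_uIoc fun y hy => ?_
    have hy' : y ∈ uIcc a b := uIoc_subset_uIcc hy
    have h1 : ‖w y‖ ≤ M := hM y hy'
    have h2 : ‖kern x y‖ ≤ Real.cosh 1 / (2 * Real.sinh (1/2)) := by
      rw [Real.norm_eq_abs, abs_of_nonneg (kern_nonneg x y)]
      exact kern_upper x y
    calc ‖kern x y * w y‖ = ‖kern x y‖ * ‖w y‖ := norm_mul _ _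
      _ ≤ Real.cosh 1 / (2 * Real.sinh (1/2)) * M := by
          apply mul_le_mul h2 h1 (norm_nonneg _)
          positivity


lemma lam2S_def' (w : ℝ → ℝ) (x : ℝ) :
    lam2S w x = ∫ y in (0:ℝ)..1, kern x y * w y := rfl

/-- The explicit formula for `lam2S` after unfolding the periodic kernel. -/
lemma lam2S_eq (w : ℝ → ℝ) (hw : Continuous w) (hper : Function.Periodic w 1) (x : ℝ) :
    lam2S w x =
      (Real.exp (x - 1/2) * (∫ y in (x-1)..x, Real.exp (-y) * w y)
        + Real.exp (1/2 - x) * (∫ y in (x-1)..x, Real.exp y * w y))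
      / (4 * Real.sinh (1/2)) := by
  have hgper : Function.Periodic (fun y => kern x y * w y) 1 := fun y => by
    simp only []
    rw [kern_shift x y, hper y]
  have h1 : lam2S w x = ∫ y in (x-1)..x, kern x y * w y := by
    rw [lam2S_def']
    have := hgper.intervalIntegral_add_eq 0 (x - 1)
    simp only [zero_add, sub_add_cancel] at this
    exact this
  have h2 : (∫ y in (x-1)..x, kern x y * w y)
      = ∫ y in (x-1)..x,
          (Real.exp (x - 1/2) / (4 * Real.sinh (1/2)) * (Real.exp (-y) * w y)
            + Real.exp (1/2 - x) / (4 * Real.sinh (1/2)) * (Real.exp y * w y)) := by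
    apply intervalIntegral.integral_congr_ae
    filter_upwards with y hy
    have hy' : y ∈ Set.Ioc (x-1) x := by
      rwa [Set.uIoc_of_le (by linarith : x - 1 ≤ x)] at hy
    have hfl : ⌊x - y⌋ = 0 := Int.floor_eq_zero_iff.mpr
      ⟨by linarith [hy'.2], by linarith [hy'.1]⟩
    unfold kern
    rw [hfl]
    push_cast
    rw [Real.cosh_eq]
    have e1 : Real.exp (x - y - 0 - 1/2) = Real.exp (x - 1/2) * Real.exp (-y) := by
      rw [← Real.exp_add]; ring_nf
    have e2 : Real.exp (-(x - y - 0 - 1/2)) = Real.exp (1/2 - x) * Real.exp y := by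
      rw [← Real.exp_add]; ring_nf
    rw [e1, e2]
    have hs := sinh_half_pos
    field_simp
    ring
  rw [h1, h2]
  have hi1 : IntervalIntegrable (fun y => Real.exp (x - 1/2) / (4 * Real.sinh (1/2))
      * (Real.exp (-y) * w y)) volume (x-1) x := by
    apply Continuous.intervalIntegrable
    exact continuous_const.mul ((Real.continuous_exp.comp continuous_neg).mul hw)
  have hi2 : IntervalIntegrable (fun y => Real.exp (1/2 - x) / (4 * Real.sinh (1/2))
      * (Real.exp y * w y)) volume (x-1) x := by
    apply Continuous.intervalIntegrable
    exact continuous_const.mul (Real.continuous_exp.mul hw)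
  rw [intervalIntegral.integral_add hi1 hi2, intervalIntegral.integral_const_mul,
    intervalIntegral.integral_const_mul]
  have hs := sinh_half_pos
  field_simp

/-- FTC for a moving window of length 1. -/
lemma hasDerivAt_window (g : ℝ → ℝ) (hg : Continuous g) (x : ℝ) :
    HasDerivAt (fun t => ∫ y in (t-1)..t, g y) (g x - g (x-1)) x := by
  have h0 : (fun t => ∫ y in (t-1)..t, g y)
      = fun t => (∫ y in (0:ℝ)..t, g y) - ∫ y in (0:ℝ)..(t-1), g y := by
    funext t
    rw [intervalIntegral.integral_interval_sub_left (hg.intervalIntegrable _ _)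
      (hg.intervalIntegrable _ _)]
  rw [h0]
  have hF : ∀ z : ℝ, HasDerivAt (fun t => ∫ y in (0:ℝ)..t, g y) (g z) z := fun z =>
    intervalIntegral.integral_hasDerivAt_right (hg.intervalIntegrable _ _)
      (hg.stronglyMeasurableAtFilter _ _) hg.continuousAt
  have h2 : HasDerivAt (fun t : ℝ => ∫ y in (0:ℝ)..(t-1), g y) (g (x-1)) x := by
    have := (hF (x-1)).comp x ((hasDerivAt_id x).sub_const 1)
    simpa [Function.comp_def] using this
  exact (hF x).sub h2

/-- `lam2S w` is differentiable, with an explicit derivative. -/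
lemma hasDerivAt_lam2S (w : ℝ → ℝ) (hw : Continuous w) (hper : Function.Periodic w 1) (x : ℝ) :
    HasDerivAt (lam2S w)
      ((Real.exp (x - 1/2) * (∫ y in (x-1)..x, Real.exp (-y) * w y)
        - Real.exp (1/2 - x) * (∫ y in (x-1)..x, Real.exp y * w y))
        / (4 * Real.sinh (1/2))) x := by
  have hL : lam2S w = fun x =>
      (Real.exp (x - 1/2) * (∫ y in (x-1)..x, Real.exp (-y) * w y)
        + Real.exp (1/2 - x) * (∫ y in (x-1)..x, Real.exp y * w y))
      / (4 * Real.sinh (1/2)) := funext (lam2S_eq w hw hper)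
  rw [hL]
  have hwshift : ∀ t : ℝ, w (t - 1) = w t := fun t => by
    have := hper (t - 1); simpa using this.symm
  have hgA : Continuous fun y => Real.exp (-y) * w y :=
    (Real.continuous_exp.comp continuous_neg).mul hw
  have hgB : Continuous fun y => Real.exp y * w y := Real.continuous_exp.mul hw
  have hA : HasDerivAt (fun t => ∫ y in (t-1)..t, Real.exp (-y) * w y)
      ((1 - Real.exp 1) * (Real.exp (-x) * w x)) x := by
    have := hasDerivAt_window _ hgA x
    have e : Real.exp (-x) * w x - Real.exp (-(x-1)) * w (x-1)
        = (1 - Real.exp 1) * (Real.exp (-x) * w x) := by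
      rw [hwshift x, show -(x-1) = -x + 1 by ring, Real.exp_add]
      ring
    rwa [e] at this
  have hB : HasDerivAt (fun t => ∫ y in (t-1)..t, Real.exp y * w y)
      ((1 - Real.exp (-1)) * (Real.exp x * w x)) x := by
    have := hasDerivAt_window _ hgB x
    have e : Real.exp x * w x - Real.exp (x-1) * w (x-1)
        = (1 - Real.exp (-1)) * (Real.exp x * w x) := by
      rw [hwshift x, show x - 1 = x + (-1) by ring, Real.exp_add]
      ring
    rwa [e] at this
  have hE1 : HasDerivAt (fun t : ℝ => Real.exp (t - 1/2)) (Real.exp (x - 1/2)) x := by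
    have := (Real.hasDerivAt_exp (x - 1/2)).comp x ((hasDerivAt_id x).sub_const (1/2))
    simpa [Function.comp_def] using this
  have hE2 : HasDerivAt (fun t : ℝ => Real.exp (1/2 - t)) (-Real.exp (1/2 - x)) x := by
    have := (Real.hasDerivAt_exp (1/2 - x)).comp x ((hasDerivAt_id x).const_sub (1/2))
    simpa [Function.comp_def] using this
  have hsum := ((hE1.mul hA).add (hE2.mul hB)).div_const (4 * Real.sinh (1/2))
  have e1 : Real.exp (x - 1/2) * Real.exp (-x) = Real.exp (-(1/2) : ℝ) := by
    rw [← Real.exp_add]; ring_nf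
  have e2 : Real.exp (1/2 - x) * Real.exp x = Real.exp ((1/2) : ℝ) := by
    rw [← Real.exp_add]; ring_nf
  have e3 : Real.exp (-(1/2) : ℝ) * Real.exp 1 = Real.exp ((1/2) : ℝ) := by
    rw [← Real.exp_add]; norm_num
  have e4 : Real.exp ((1/2) : ℝ) * Real.exp (-1 : ℝ) = Real.exp (-(1/2) : ℝ) := by
    rw [← Real.exp_add]; norm_num
  have hnum : Real.exp (x - 1/2) * ((1 - Real.exp 1) * (Real.exp (-x) * w x))
      + Real.exp (1/2 - x) * ((1 - Real.exp (-1)) * (Real.exp x * w x)) = 0 := by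
    linear_combination ((1 - Real.exp 1) * w x) * e1
      + ((1 - Real.exp (-1)) * w x) * e2 - w x * e3 - w x * e4
  refine hsum.congr_deriv ?_
  symm
  linear_combination (-1 / (4 * Real.sinh (1/2))) * hnum


/-- The first derivative of `lam2S w`, as a function. -/
noncomputable def phi (w : ℝ → ℝ) (x : ℝ) : ℝ :=
  (Real.exp (x - 1/2) * (∫ y in (x-1)..x, Real.exp (-y) * w y)
    - Real.exp (1/2 - x) * (∫ y in (x-1)..x, Real.exp y * w y))
    / (4 * Real.sinh (1/2))

lemma hasDerivAt_lam2S' (w : ℝ → ℝ) (hw : Continuous w) (hper : Function.Periodic w 1) (x : ℝ) :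
    HasDerivAt (lam2S w) (phi w x) x := hasDerivAt_lam2S w hw hper x

/-- The second derivative identity: `(lam2S w)'' = lam2S w - w`. -/
lemma hasDerivAt_phi (w : ℝ → ℝ) (hw : Continuous w) (hper : Function.Periodic w 1) (x : ℝ) :
    HasDerivAt (phi w) (lam2S w x - w x) x := by
  have hwshift : ∀ t : ℝ, w (t - 1) = w t := fun t => by
    have := hper (t - 1); simpa using this.symm
  have hgA : Continuous fun y => Real.exp (-y) * w y :=
    (Real.continuous_exp.comp continuous_neg).mul hw
  have hgB : Continuous fun y => Real.exp y * w y := Real.continuous_exp.mul hw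
  have hA : HasDerivAt (fun t => ∫ y in (t-1)..t, Real.exp (-y) * w y)
      ((1 - Real.exp 1) * (Real.exp (-x) * w x)) x := by
    have := hasDerivAt_window _ hgA x
    have e : Real.exp (-x) * w x - Real.exp (-(x-1)) * w (x-1)
        = (1 - Real.exp 1) * (Real.exp (-x) * w x) := by
      rw [hwshift x, show -(x-1) = -x + 1 by ring, Real.exp_add]
      ring
    rwa [e] at this
  have hB : HasDerivAt (fun t => ∫ y in (t-1)..t, Real.exp y * w y)
      ((1 - Real.exp (-1)) * (Real.exp x * w x)) x := by
    have := hasDerivAt_window _ hgB x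
    have e : Real.exp x * w x - Real.exp (x-1) * w (x-1)
        = (1 - Real.exp (-1)) * (Real.exp x * w x) := by
      rw [hwshift x, show x - 1 = x + (-1) by ring, Real.exp_add]
      ring
    rwa [e] at this
  have hE1 : HasDerivAt (fun t : ℝ => Real.exp (t - 1/2)) (Real.exp (x - 1/2)) x := by
    have := (Real.hasDerivAt_exp (x - 1/2)).comp x ((hasDerivAt_id x).sub_const (1/2))
    simpa [Function.comp_def] using this
  have hE2 : HasDerivAt (fun t : ℝ => Real.exp (1/2 - t)) (-Real.exp (1/2 - x)) x := by
    have := (Real.hasDerivAt_exp (1/2 - x)).comp x ((hasDerivAt_id x).const_sub (1/2))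
    simpa [Function.comp_def] using this
  have hsum := ((hE1.mul hA).sub (hE2.mul hB)).div_const (4 * Real.sinh (1/2))
  have hphi : phi w = fun x =>
      (Real.exp (x - 1/2) * (∫ y in (x-1)..x, Real.exp (-y) * w y)
        - Real.exp (1/2 - x) * (∫ y in (x-1)..x, Real.exp y * w y))
        / (4 * Real.sinh (1/2)) := rfl
  rw [hphi]
  have e1 : Real.exp (x - 1/2) * Real.exp (-x) = Real.exp (-(1/2) : ℝ) := by
    rw [← Real.exp_add]; ring_nf
  have e2 : Real.exp (1/2 - x) * Real.exp x = Real.exp ((1/2) : ℝ) := by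
    rw [← Real.exp_add]; ring_nf
  have e3 : Real.exp (-(1/2) : ℝ) * Real.exp 1 = Real.exp ((1/2) : ℝ) := by
    rw [← Real.exp_add]; norm_num
  have e4 : Real.exp ((1/2) : ℝ) * Real.exp (-1 : ℝ) = Real.exp (-(1/2) : ℝ) := by
    rw [← Real.exp_add]; norm_num
  have hsinh : Real.sinh ((1:ℝ)/2) = (Real.exp ((1/2):ℝ) - Real.exp (-(1/2):ℝ)) / 2 :=
    Real.sinh_eq _
  have hnum : Real.exp (x - 1/2) * ((1 - Real.exp 1) * (Real.exp (-x) * w x))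
      - Real.exp (1/2 - x) * ((1 - Real.exp (-1)) * (Real.exp x * w x))
      = -(4 * Real.sinh (1/2)) * w x := by
    rw [hsinh]
    linear_combination ((1 - Real.exp 1) * w x) * e1
      - ((1 - Real.exp (-1)) * w x) * e2 - w x * e3 + w x * e4
  have hL := lam2S_eq w hw hper x
  refine hsum.congr_deriv ?_
  symm
  have hs := sinh_half_pos
  have hne : (4 * Real.sinh (1/2)) ≠ 0 := by nlinarith
  rw [hL, eq_div_iff hne, sub_mul, div_mul_cancel₀ _ hne]
  linear_combination (-1 : ℝ) * hnum

/-- Lower bound on `lam2S w` for nonnegative `w`. -/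
lemma lam2S_lower (w : ℝ → ℝ) (hw : Continuous w) (hnn : ∀ y, 0 ≤ w y) (x : ℝ) :
    (∫ y in (0:ℝ)..1, w y) / (2 * Real.sinh (1/2)) ≤ lam2S w x := by
  rw [lam2S_def', div_eq_mul_inv, ← intervalIntegral.integral_mul_const]
  apply intervalIntegral.integral_mono_on (by norm_num)
    (by apply Continuous.intervalIntegrable; exact hw.mul continuous_const)
    (kern_intble w hw x 0 1)
  intro y _
  have h1 : (2 * Real.sinh (1/2))⁻¹ ≤ kern x y := by
    rw [← one_div]; exact kern_lower x y
  calc w y * (2 * Real.sinh (1/2))⁻¹ = (2 * Real.sinh (1/2))⁻¹ * w y := by ring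
    _ ≤ kern x y * w y := mul_le_mul_of_nonneg_right h1 (hnn y)

/-- A nonnegative continuous periodic function with vanishing integral vanishes. -/
lemma eq_zero_of_integral_zero (w : ℝ → ℝ) (hw : Continuous w)
    (hper : Function.Periodic w 1) (hnn : ∀ y, 0 ≤ w y)
    (hint : (∫ y in (0:ℝ)..1, w y) = 0) (x : ℝ) : w x = 0 := by
  have hshift : (∫ y in (x - 1/2)..(x - 1/2 + 1), w y) = 0 := by
    rw [hper.intervalIntegral_add_eq (x - 1/2) 0]
    simpa using hint
  set F : ℝ → ℝ := fun t => ∫ y in (x - 1/2)..t, w y with hF_def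
  have hF : ∀ t : ℝ, HasDerivAt F (w t) t := fun t =>
    intervalIntegral.integral_hasDerivAt_right (hw.intervalIntegrable _ _)
      (hw.stronglyMeasurableAtFilter _ _) hw.continuousAt
  have hFz : ∀ t ∈ Set.Icc (x - 1/2) (x - 1/2 + 1), F t = 0 := by
    intro t ht
    have h1 : 0 ≤ F t := intervalIntegral.integral_nonneg ht.1 fun y _ => hnn y
    have h2 : F t + (∫ y in t..(x - 1/2 + 1), w y) = F (x - 1/2 + 1) :=
      intervalIntegral.integral_add_adjacent_intervals (hw.intervalIntegrable _ _)
        (hw.intervalIntegrable _ _)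
    have h3 : 0 ≤ ∫ y in t..(x - 1/2 + 1), w y :=
      intervalIntegral.integral_nonneg ht.2 fun y _ => hnn y
    have h4 : F (x - 1/2 + 1) = 0 := hshift
    linarith
  have hev : (fun _ : ℝ => (0:ℝ)) =ᶠ[nhds x] F := by
    filter_upwards [Ioo_mem_nhds (by linarith : x - 1/2 < x)
      (by linarith : x < x - 1/2 + 1)] with t ht
    exact (hFz t ⟨ht.1.le, ht.2.le⟩).symm
  have h0 : HasDerivAt (fun _ : ℝ => (0:ℝ)) (w x) x := (hF x).congr_of_eventuallyEq hev
  have := (hasDerivAt_const x (0:ℝ)).unique h0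
  linarith

lemma sum_sq_zero {a b c : ℝ} (h : a^2 + b^2 + c^2 = 0) : a = 0 ∧ b = 0 ∧ c = 0 := by
  refine ⟨pow_eq_zero_iff two_ne_zero |>.mp ?_, pow_eq_zero_iff two_ne_zero |>.mp ?_,
    pow_eq_zero_iff two_ne_zero |>.mp ?_⟩ <;>
    nlinarith [sq_nonneg a, sq_nonneg b, sq_nonneg c]

lemma sum_sq_zero' {a b c : ℝ} (h : a^2 + (1/2)*b^2 + (1/2)*c^2 = 0) :
    a = 0 ∧ b = 0 ∧ c = 0 := by
  refine ⟨pow_eq_zero_iff two_ne_zero |>.mp ?_, pow_eq_zero_iff two_ne_zero |>.mp ?_,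
    pow_eq_zero_iff two_ne_zero |>.mp ?_⟩ <;>
    nlinarith [sq_nonneg a, sq_nonneg b, sq_nonneg c]

end PiCH

/-- **Unique continuation for the π-Camassa-Holm system (section 3.4).**
A classical solution `(u,ρ)` of the π-Camassa-Holm system on `[0,T) × 𝕊`
(functions on the circle are modelled as 1-periodic functions on `ℝ`), whose
quantity `H(t) = ∫_𝕊 (u² + uₓ² + π(ρ)²) dx` is conserved, and such that `u` and
`π(ρ)` vanish identically on a nonempty open set `Ω ⊆ (0,T) × 𝕊`, satisfies
`u ≡ 0` and `π(ρ) ≡ 0` on `[0,T) × 𝕊`. -/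
theorem piCamassaHolm_unique_continuation (T : ℝ) (hT : 0 < T)
    (u ρ : ℝ → ℝ → ℝ)
    -- functions on the circle: 1-periodic in x
    (huper : ∀ t ∈ Set.Ico (0:ℝ) T, Function.Periodic (u t) 1)
    (hρper : ∀ t ∈ Set.Ico (0:ℝ) T, Function.Periodic (ρ t) 1)
    -- regularity in x
    (hureg : ∀ t ∈ Set.Ico (0:ℝ) T, ContDiff ℝ 2 (u t))
    (hρreg : ∀ t ∈ Set.Ico (0:ℝ) T, ContDiff ℝ 1 (ρ t))
    -- time derivatives exist on (0,T) × 𝕊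
    (hut : ∀ t ∈ Set.Ioo (0:ℝ) T, ∀ x : ℝ, DifferentiableAt ℝ (fun s => u s x) t)
    (hρt : ∀ t ∈ Set.Ioo (0:ℝ) T, ∀ x : ℝ, DifferentiableAt ℝ (fun s => ρ s x) t)
    -- the π-Camassa-Holm system holds pointwise on (0,T) × 𝕊
    (heq1 : ∀ t ∈ Set.Ioo (0:ℝ) T, ∀ x : ℝ,
      deriv (fun s => u s x) t + u t x * deriv (u t) x =
        -(deriv (lam2S (fun y =>
          (u t y)^2 + (1/2) * (deriv (u t) y)^2 + (1/2) * (piS (ρ t) y)^2)) x))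
    (heq2 : ∀ t ∈ Set.Ioo (0:ℝ) T, ∀ x : ℝ,
      deriv (fun s => piS (ρ s) x) t + u t x * deriv (ρ t) x =
        -(piS (ρ t) x * deriv (u t) x))
    -- conserved quantity H(t) = ∫_𝕊 (u² + uₓ² + π(ρ)²) dx
    (hcons : ∃ c : ℝ, ∀ t ∈ Set.Ico (0:ℝ) T,
      (∫ x in (0:ℝ)..1, ((u t x)^2 + (deriv (u t) x)^2 + (piS (ρ t) x)^2)) = c)
    -- nonempty open set on which u and π(ρ) vanish identically
    (Ω : Set (ℝ × ℝ)) (hΩopen : IsOpen Ω) (hΩne : Ω.Nonempty)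
    (hΩsub : Ω ⊆ Set.Ioo (0:ℝ) T ×ˢ Set.univ)
    (hvanu : ∀ p ∈ Ω, u p.1 p.2 = 0)
    (hvanπ : ∀ p ∈ Ω, piS (ρ p.1) p.2 = 0) :
    ∀ t ∈ Set.Ico (0:ℝ) T, ∀ x : ℝ, u t x = 0 ∧ piS (ρ t) x = 0 := by
  classical
  obtain ⟨⟨t₀, x₀⟩, hp⟩ := hΩne
  have ht₀ : t₀ ∈ Set.Ioo (0:ℝ) T := (hΩsub hp).1
  have ht₀' : t₀ ∈ Set.Ico (0:ℝ) T := ⟨ht₀.1.le, ht₀.2⟩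
  have huc : ∀ t ∈ Set.Ico (0:ℝ) T, Continuous (u t) := fun t ht => (hureg t ht).continuous
  have hduc : ∀ t ∈ Set.Ico (0:ℝ) T, Continuous (deriv (u t)) := fun t ht =>
    (hureg t ht).continuous_deriv (by norm_num)
  have hπc : ∀ t ∈ Set.Ico (0:ℝ) T, Continuous (piS (ρ t)) := fun t ht => by
    unfold piS
    exact (hρreg t ht).continuous.sub continuous_const
  have hdup : ∀ t ∈ Set.Ico (0:ℝ) T, Function.Periodic (deriv (u t)) 1 := by
    intro t ht y
    have hfun : (fun z => u t (z + 1)) = u t := funext (huper t ht)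
    rw [← deriv_comp_add_const, hfun]
  have hπp : ∀ t ∈ Set.Ico (0:ℝ) T, Function.Periodic (piS (ρ t)) 1 := fun t ht y => by
    unfold piS
    rw [hρper t ht y]
  set w : ℝ → ℝ := fun y =>
    (u t₀ y)^2 + (1/2) * (deriv (u t₀) y)^2 + (1/2) * (piS (ρ t₀) y)^2 with hw_def
  have hwc : Continuous w := by
    apply Continuous.add
    apply Continuous.add
    · exact (huc t₀ ht₀').pow 2
    · exact continuous_const.mul ((hduc t₀ ht₀').pow 2)
    · exact continuous_const.mul ((hπc t₀ ht₀').pow 2)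
  have hwper : Function.Periodic w 1 := fun y => by
    simp only [hw_def]
    rw [huper t₀ ht₀' y, hdup t₀ ht₀' y, hπp t₀ ht₀' y]
  have hwnn : ∀ y, 0 ≤ w y := fun y => by
    simp only [hw_def]
    positivity
  set S : Set ℝ := (fun x => (t₀, x)) ⁻¹' Ω with hS_def
  have hScont : Continuous fun x : ℝ => (t₀, x) := continuous_const.prodMk continuous_id
  have hSopen : IsOpen S := hΩopen.preimage hScont
  have hx₀S : x₀ ∈ S := hp
  have hderiv0 : ∀ x ∈ S, deriv (lam2S w) x = 0 := by
    intro x hx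
    have h1 := heq1 t₀ ht₀ x
    have htd : deriv (fun s => u s x) t₀ = 0 := by
      have hev : (fun s => u s x) =ᶠ[nhds t₀] fun _ => (0:ℝ) := by
        have hc : ContinuousAt (fun s : ℝ => (s, x)) t₀ :=
          (continuous_id.prodMk continuous_const).continuousAt
        filter_upwards [hc.preimage_mem_nhds (hΩopen.mem_nhds hx)] with s hs
        exact hvanu _ hs
      rw [hev.deriv_eq]
      simp
    have hux : u t₀ x = 0 := hvanu (t₀, x) hx
    rw [htd, hux] at h1
    simp only [zero_add, zero_mul] at h1
    linarith
  have hA : ∀ x, HasDerivAt (lam2S w) (PiCH.phi w x) x :=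
    PiCH.hasDerivAt_lam2S' w hwc hwper
  have hφ0 : ∀ x ∈ S, PiCH.phi w x = 0 := fun x hx => by
    rw [← (hA x).deriv]; exact hderiv0 x hx
  have hφev : (fun _ : ℝ => (0:ℝ)) =ᶠ[nhds x₀] PiCH.phi w := by
    filter_upwards [hSopen.mem_nhds hx₀S] with z hz
    exact (hφ0 z hz).symm
  have hd2 : HasDerivAt (fun _ : ℝ => (0:ℝ)) (lam2S w x₀ - w x₀) x₀ :=
    (PiCH.hasDerivAt_phi w hwc hwper x₀).congr_of_eventuallyEq hφev
  have hkey : (0:ℝ) = lam2S w x₀ - w x₀ := (hasDerivAt_const x₀ (0:ℝ)).unique hd2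
  have hux₀ : u t₀ x₀ = 0 := hvanu (t₀, x₀) hp
  have hπx₀ : piS (ρ t₀) x₀ = 0 := hvanπ (t₀, x₀) hp
  have hdux₀ : deriv (u t₀) x₀ = 0 := by
    have hev : u t₀ =ᶠ[nhds x₀] fun _ => (0:ℝ) := by
      filter_upwards [hSopen.mem_nhds hx₀S] with z hz
      exact hvanu (t₀, z) hz
    rw [hev.deriv_eq]
    simp
  have hwx₀ : w x₀ = 0 := by
    simp only [hw_def, hux₀, hπx₀, hdux₀]
    ring
  have hl0 : lam2S w x₀ = 0 := by linarith
  have hs := PiCH.sinh_half_pos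
  have hnn' : 0 ≤ ∫ y in (0:ℝ)..1, w y :=
    intervalIntegral.integral_nonneg (by norm_num) fun y _ => hwnn y
  have hint0 : (∫ y in (0:ℝ)..1, w y) = 0 := by
    have hge := PiCH.lam2S_lower w hwc hwnn x₀
    rw [hl0] at hge
    have h2s : (0:ℝ) < 2 * Real.sinh (1/2) := by linarith
    have hmul := mul_le_mul_of_nonneg_right hge h2s.le
    rw [div_mul_cancel₀ _ h2s.ne', zero_mul] at hmul
    linarith
  have hwz : ∀ y, w y = 0 := PiCH.eq_zero_of_integral_zero w hwc hwper hwnn hint0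
  have hcompo : ∀ y, u t₀ y = 0 ∧ deriv (u t₀) y = 0 ∧ piS (ρ t₀) y = 0 := fun y =>
    PiCH.sum_sq_zero' (hwz y)
  obtain ⟨c, hc⟩ := hcons
  have hc0 : c = 0 := by
    rw [← hc t₀ ht₀']
    rw [intervalIntegral.integral_congr (g := fun _ => (0:ℝ))
      (fun y _ => by obtain ⟨h1, h2, h3⟩ := hcompo y; simp [h1, h2, h3])]
    simp
  intro t ht x
  set h : ℝ → ℝ := fun y =>
    (u t y)^2 + (deriv (u t) y)^2 + (piS (ρ t) y)^2 with hh_def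
  have hhc : Continuous h := by
    apply Continuous.add
    apply Continuous.add
    · exact (huc t ht).pow 2
    · exact (hduc t ht).pow 2
    · exact (hπc t ht).pow 2
  have hhper : Function.Periodic h 1 := fun y => by
    simp only [hh_def]
    rw [huper t ht y, hdup t ht y, hπp t ht y]
  have hhnn : ∀ y, 0 ≤ h y := fun y => by
    simp only [hh_def]
    positivity
  have hhint : (∫ y in (0:ℝ)..1, h y) = 0 := by
    simp only [hh_def]
    rw [hc t ht, hc0]
  have hz := PiCH.sum_sq_zero (PiCH.eq_zero_of_integral_zero h hhc hhper hhnn hhint x)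
  exact ⟨hz.1, hz.2.2⟩
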